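/- Let c = e^{−b/a} with a > 0. The expression II̅(u) = a/u + 2u(a·ln u + b)/(u − c)² − (2a(1 + ln u) + 2b)/(u − c), defined for u > c, satisfies lim_{u → c⁺} II̅(u) = 0. -/

import Mathlib

open Real Filter Topology

lemma key_log_limit :
    Tendsto (fun x : ℝ => (Real.log (1 + x) - x) / x ^ 2) (𝓝[≠] (0:ℝ)) (𝓝 (-1/2)) := by
  have h0 : Tendsto (fun x : ℝ => (Real.log (1 + x) - x) / x ^ 2 - (-1/2)) (𝓝[≠] (0:ℝ)) (𝓝 0) := by
    apply squeeze_zero_norm' (a := fun x : ℝ => |x| / (1 - |x|))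
    · filter_upwards [self_mem_nhdsWithin,
        inter_mem_nhdsWithin {(0:ℝ)}ᶜ (Metric.ball_mem_nhds (0:ℝ) (by norm_num : (0:ℝ) < 1/2))]
        with x hx hx2
      have hxne : x ≠ 0 := hx
      have hxlt : |x| < 1/2 := by simpa [Real.dist_eq] using hx2.2
      have hlt1 : |x| < 1 := hxlt.trans (by norm_num)
      have hb := abs_log_sub_add_sum_range_le (x := -x) (by simpa using hlt1) 2
      have hsum : (∑ i ∈ Finset.range 2, (-x) ^ (i + 1) / (i + 1)) = -x + x^2/2 := by
        simp [Finset.sum_range_succ]; ring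
      rw [hsum] at hb
      have hb' : |Real.log (1 + x) - x + x^2/2| ≤ |x|^3 / (1 - |x|) := by
        calc |Real.log (1 + x) - x + x^2/2| = |(-x + x^2/2) + Real.log (1 - (-x))| := by
              ring_nf
            _ ≤ |(-x)|^(2+1) / (1 - |(-x)|) := hb
            _ = |x|^3 / (1 - |x|) := by simp
      have hx2pos : (0:ℝ) < x^2 := by positivity
      have h1m : (0:ℝ) < 1 - |x| := by linarith
      rw [Real.norm_eq_abs]
      have heq : (Real.log (1 + x) - x) / x ^ 2 - (-1/2)
          = (Real.log (1 + x) - x + x^2/2) / x^2 := by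
        field_simp
        ring
      rw [heq, abs_div, abs_of_pos hx2pos]
      calc |Real.log (1 + x) - x + x^2/2| / x^2 ≤ (|x|^3 / (1 - |x|)) / x^2 := by
            gcongr
        _ = |x| / (1 - |x|) := by
            rw [pow_succ, sq_abs]
            field_simp
    · have : ContinuousAt (fun x : ℝ => |x| / (1 - |x|)) 0 := by
        apply ContinuousAt.div
        · exact continuous_abs.continuousAt
        · exact (continuous_const.sub continuous_abs).continuousAt
        · norm_num
      have := this.tendsto
      simp only [abs_zero, sub_zero, zero_div] at this
      exact this.mono_left nhdsWithin_le_nhds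
  have := h0.add_const (-1/2)
  simpa using this

theorem stmt_6 (a b : ℝ) (ha : 0 < a) :
    Tendsto (fun u : ℝ =>
        a / u + 2 * u * (a * Real.log u + b) / (u - Real.exp (-b / a)) ^ 2
          - (2 * a * (1 + Real.log u) + 2 * b) / (u - Real.exp (-b / a)))
      (𝓝[>] (Real.exp (-b / a))) (𝓝 0) := by
  set c : ℝ := Real.exp (-b / a) with hc
  have hcpos : 0 < c := Real.exp_pos _
  have hlogc : Real.log c = -b / a := Real.log_exp _
  have hb : b = -a * Real.log c := by
    rw [hlogc]; field_simp
  -- limit of a/u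
  have h1 : Tendsto (fun u : ℝ => a / u) (𝓝[>] c) (𝓝 (a / c)) := by
    exact (tendsto_const_nhds.div tendsto_id hcpos.ne').mono_left nhdsWithin_le_nhds
  -- limit of second piece via composition
  have hx : Tendsto (fun u : ℝ => u / c - 1) (𝓝[>] c) (𝓝[≠] (0:ℝ)) := by
    rw [tendsto_nhdsWithin_iff]
    constructor
    · have : Tendsto (fun u : ℝ => u / c - 1) (𝓝 c) (𝓝 (c / c - 1)) :=
        (tendsto_id.div_const c).sub_const 1
      rw [div_self hcpos.ne'] at this
      simpa using this.mono_left nhdsWithin_le_nhds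
    · filter_upwards [self_mem_nhdsWithin] with u hu
      have : u / c - 1 > 0 := by
        have := (div_lt_div_iff_of_pos_right hcpos).mpr hu
        rw [div_self hcpos.ne'] at this
        linarith
      simp only [Set.mem_compl_iff, Set.mem_singleton_iff]
      exact ne_of_gt this
  have h2 : Tendsto (fun u : ℝ =>
      (2 * a / c) * ((Real.log (1 + (u / c - 1)) - (u / c - 1)) / (u / c - 1) ^ 2))
      (𝓝[>] c) (𝓝 ((2 * a / c) * (-1/2))) :=
    ((key_log_limit.comp hx)).const_mul _
  have hsum : Tendsto (fun u : ℝ => a / u +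
      (2 * a / c) * ((Real.log (1 + (u / c - 1)) - (u / c - 1)) / (u / c - 1) ^ 2))
      (𝓝[>] c) (𝓝 (a / c + (2 * a / c) * (-1/2))) := h1.add h2
  have hval : a / c + (2 * a / c) * (-1/2) = 0 := by ring
  rw [hval] at hsum
  refine hsum.congr' ?_
  filter_upwards [self_mem_nhdsWithin] with u hu
  have hu' : c < u := hu
  have hune : u ≠ 0 := by linarith
  have hucne : u - c ≠ 0 := by intro h; apply absurd hu'; linarith [sub_eq_zero.mp h]
  have hlogeq : Real.log (1 + (u / c - 1)) = Real.log u - Real.log c := by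
    rw [show (1 : ℝ) + (u / c - 1) = u / c by ring, Real.log_div hune hcpos.ne']
  rw [hlogeq, hb]
  have hxne : u / c - 1 ≠ 0 := by
    intro h
    apply hucne
    have : u / c = 1 := by linarith
    field_simp at this
    linarith
  field_simp
  ring
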